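/- Fix an integer q ≥ 1 and a real number τ > 1. Let 𝒜 be a finite k-uniform r-spread family (for some r ≥ 1) and let F ⊆ 𝒜. Then there exist a family 𝒮 ⊆ ∂_{≤q} 𝒜, families F_S ⊆ 𝒜(S) for each S ∈ 𝒮, and a family ℛ ⊆ F, such that F is the disjoint union of ℛ and the families {S ∪ F : F ∈ F_S} over S ∈ 𝒮; each F_S is τ-homogeneous with respect to 𝒜(S) and satisfies |F_S| ≥ 16 · τ^{−q} · |𝒜(S)|; and |ℛ| ≤ 32 · τ^{−q} · |𝒜|. -/

import Mathlib

open Finset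
open scoped Classical

variable {γ : Type*}

/-- `F(B) = {F \ B : F ∈ F, B ⊆ F}`. -/
def famRestrict [DecidableEq γ] (F : Finset (Finset γ)) (B : Finset γ) : Finset (Finset γ) :=
  (F.filter fun A => B ⊆ A).image fun A => A \ B

/-- `F[ℬ] = {F ∈ F : ∃ B ∈ ℬ, B ⊆ F}`. -/
def famAbove [DecidableEq γ] (F ℬ : Finset (Finset γ)) : Finset (Finset γ) :=
  F.filter fun A => ∃ B ∈ ℬ, B ⊆ A

/-- The shadow `∂_h F`. -/
def famShadow [DecidableEq γ] (F : Finset (Finset γ)) (h : ℕ) : Finset (Finset γ) :=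
  F.biUnion fun A => Finset.powersetCard h A

/-- The shadow `∂_{≤h} F`. -/
def famShadowLe [DecidableEq γ] (F : Finset (Finset γ)) (h : ℕ) : Finset (Finset γ) :=
  (Finset.range (h + 1)).biUnion fun j => famShadow F j

/-- `P` is a sunflower with `s` petals and core `K`: `P` consists of `s` sets, `K` is
the intersection of all members of `P`, and any two distinct members intersect in `K`. -/
def IsSunflower [DecidableEq γ] (P : Finset (Finset γ)) (s : ℕ) (K : Finset γ) : Prop :=
  P.card = s ∧ ∃ hP : P.Nonempty, K = P.inf' hP id ∧
    ∀ A ∈ P, ∀ B ∈ P, A ≠ B → A ∩ B = K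

/-- `F` contains no sunflower with `s` petals (with arbitrary core). -/
def SunflowerFree [DecidableEq γ] (F : Finset (Finset γ)) (s : ℕ) : Prop :=
  ∀ P ⊆ F, ∀ K : Finset γ, ¬ IsSunflower P s K

/-- `φ(s,t)`: the maximal size of a family of `t`-element sets with no sunflower
with `s` petals. -/
noncomputable def phi (s t : ℕ) : ℕ :=
  sSup {m : ℕ | ∃ F : Finset (Finset ℕ),
    (∀ A ∈ F, A.card = t) ∧ SunflowerFree F s ∧ F.card = m}

/-- `G` is `R`-spread: `|G(X)| ≤ R^{-|X|} |G|` for every `X`. -/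
def IsSpread [DecidableEq γ] (R : ℝ) (G : Finset (Finset γ)) : Prop :=
  ∀ X : Finset γ, ((famRestrict G X).card : ℝ) ≤ R ^ (-(X.card : ℤ)) * G.card

/-- `F` is `k`-uniform. -/
def IsUniform (F : Finset (Finset γ)) (k : ℕ) : Prop := ∀ A ∈ F, A.card = k

/-- `𝒜` is `(r,t)`-spread: `𝒜(T)` is `r`-spread for every `T ∈ ∂_{≤t} 𝒜`. -/
def IsRTSpread [DecidableEq γ] (𝒜 : Finset (Finset γ)) (r : ℝ) (t : ℕ) : Prop :=
  ∀ T ∈ famShadowLe 𝒜 t, IsSpread r (famRestrict 𝒜 T)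

/-- `F` is `τ`-homogeneous with respect to `𝒜`:
`|F(X)| ⬝ |𝒜| ≤ τ^{|X|} ⬝ |F| ⬝ |𝒜(X)|` for every `X`. -/
def IsHomog [DecidableEq γ] (τ : ℝ) (F 𝒜 : Finset (Finset γ)) : Prop :=
  ∀ X : Finset γ,
    ((famRestrict F X).card : ℝ) * 𝒜.card ≤ τ ^ X.card * F.card * (famRestrict 𝒜 X).card

section SpreadAux

variable {α : Type*} [DecidableEq α]

lemma mem_famRestrict' {F : Finset (Finset α)} {S B : Finset α} :
    B ∈ famRestrict F S ↔ ∃ A ∈ F, S ⊆ A ∧ A \ S = B := by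
  simp only [famRestrict, mem_image, mem_filter]
  tauto

lemma famRestrict_empty' (F : Finset (Finset α)) : famRestrict F ∅ = F := by
  ext A; simp [famRestrict]

lemma famRestrict_mono {F G : Finset (Finset α)} (h : F ⊆ G) (S : Finset α) :
    famRestrict F S ⊆ famRestrict G S :=
  image_subset_image (filter_subset_filter _ h)

lemma image_union_famRestrict (F : Finset (Finset α)) (S : Finset α) :
    (famRestrict F S).image (fun A => S ∪ A) = F.filter (fun A => S ⊆ A) := by
  ext B
  simp only [mem_image, mem_famRestrict', mem_filter]
  constructor
  · rintro ⟨C, ⟨A, hA, hSA, rfl⟩, rfl⟩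
    rw [union_sdiff_of_subset hSA]
    exact ⟨hA, hSA⟩
  · rintro ⟨hB, hSB⟩
    exact ⟨B \ S, ⟨B, hB, hSB, rfl⟩, union_sdiff_of_subset hSB⟩

lemma famRestrict_famRestrict (F : Finset (Finset α)) {S X : Finset α}
    (h : Disjoint X S) :
    famRestrict (famRestrict F S) X = famRestrict F (S ∪ X) := by
  ext B
  simp only [mem_famRestrict']
  constructor
  · rintro ⟨C, ⟨A, hA, hSA, rfl⟩, hXC, rfl⟩
    refine ⟨A, hA, union_subset hSA (hXC.trans sdiff_subset), ?_⟩
    rw [sdiff_sdiff, sup_eq_union]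
  · rintro ⟨A, hA, hSXA, rfl⟩
    refine ⟨A \ S, ⟨A, hA, (subset_union_left).trans hSXA, rfl⟩, ?_, ?_⟩
    · intro x hx
      rw [mem_sdiff]
      exact ⟨hSXA (mem_union_right _ hx), fun hxS => (disjoint_left.1 h) hx hxS⟩
    · rw [sdiff_sdiff, sup_eq_union]

lemma famRestrict_famRestrict_not_disjoint (F : Finset (Finset α)) {S X : Finset α}
    (h : ¬ Disjoint X S) :
    famRestrict (famRestrict F S) X = ∅ := by
  rw [eq_empty_iff_forall_notMem]
  intro B hB
  rw [mem_famRestrict'] at hB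
  obtain ⟨C, hC, hXC, -⟩ := hB
  rw [mem_famRestrict'] at hC
  obtain ⟨A, -, -, rfl⟩ := hC
  obtain ⟨x, hxX, hxS⟩ := not_disjoint_iff.1 h
  exact (mem_sdiff.1 (hXC hxX)).2 hxS

lemma mem_famShadowLe' {𝒜 : Finset (Finset α)} {S : Finset α} {q : ℕ} :
    S ∈ famShadowLe 𝒜 q ↔ ∃ A ∈ 𝒜, S ⊆ A ∧ S.card ≤ q := by
  simp only [famShadowLe, famShadow, mem_biUnion, mem_range, mem_powersetCard]
  constructor
  · rintro ⟨j, hj, A, hA, hSA, rfl⟩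
    exact ⟨A, hA, hSA, by omega⟩
  · rintro ⟨A, hA, hSA, hq⟩
    exact ⟨S.card, by omega, A, hA, hSA, rfl⟩

/-- The trivial decomposition: everything goes into the remainder. -/
lemma trivial_decomp (q : ℕ) (τ : ℝ)
    (𝒜 F : Finset (Finset α)) (hF : F ⊆ 𝒜)
    (hsmall : (F.card : ℝ) ≤ 32 * τ ^ (-(q:ℤ)) * 𝒜.card) :
    ∃ (𝒮 : Finset (Finset α)) (Fs : Finset α → Finset (Finset α))
      (ℛ : Finset (Finset α)),
      𝒮 ⊆ famShadowLe 𝒜 q ∧ ℛ ⊆ F ∧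
      (∀ S ∈ 𝒮, Fs S ⊆ famRestrict 𝒜 S) ∧
      F = ℛ ∪ 𝒮.biUnion (fun S => (Fs S).image fun A => S ∪ A) ∧
      Disjoint ℛ (𝒮.biUnion fun S => (Fs S).image fun A => S ∪ A) ∧
      (∀ S ∈ 𝒮, ∀ S' ∈ 𝒮, S ≠ S' →
        Disjoint ((Fs S).image fun A => S ∪ A) ((Fs S').image fun A => S' ∪ A)) ∧
      (∀ S ∈ 𝒮, IsHomog τ (Fs S) (famRestrict 𝒜 S)) ∧
      (∀ S ∈ 𝒮, 16 * τ ^ (-(q:ℤ)) * ((famRestrict 𝒜 S).card : ℝ) ≤ ((Fs S).card : ℝ)) ∧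
      ((ℛ.card : ℝ) ≤ 32 * τ ^ (-(q:ℤ)) * (𝒜.card : ℝ)) := by
  exact ⟨∅, fun _ => ∅, F, by simp, subset_rfl, by simp, by simp, by simp, by simp,
    by simp, by simp, hsmall⟩

lemma spread_aux (q : ℕ) (τ : ℝ) (hτ : 1 < τ) (𝒜 : Finset (Finset α)) :
    ∀ n : ℕ, ∀ F : Finset (Finset α), F.card ≤ n → F ⊆ 𝒜 →
    ∃ (𝒮 : Finset (Finset α)) (Fs : Finset α → Finset (Finset α))
      (ℛ : Finset (Finset α)),
      𝒮 ⊆ famShadowLe 𝒜 q ∧ ℛ ⊆ F ∧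
      (∀ S ∈ 𝒮, Fs S ⊆ famRestrict 𝒜 S) ∧
      F = ℛ ∪ 𝒮.biUnion (fun S => (Fs S).image fun A => S ∪ A) ∧
      Disjoint ℛ (𝒮.biUnion fun S => (Fs S).image fun A => S ∪ A) ∧
      (∀ S ∈ 𝒮, ∀ S' ∈ 𝒮, S ≠ S' →
        Disjoint ((Fs S).image fun A => S ∪ A) ((Fs S').image fun A => S' ∪ A)) ∧
      (∀ S ∈ 𝒮, IsHomog τ (Fs S) (famRestrict 𝒜 S)) ∧
      (∀ S ∈ 𝒮, 16 * τ ^ (-(q:ℤ)) * ((famRestrict 𝒜 S).card : ℝ) ≤ ((Fs S).card : ℝ)) ∧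
      ((ℛ.card : ℝ) ≤ 32 * τ ^ (-(q:ℤ)) * (𝒜.card : ℝ)) := by
  have hτ0 : (0:ℝ) < τ := lt_trans one_pos hτ
  have ht0 : (0:ℝ) < τ ^ (-(q:ℤ)) := zpow_pos hτ0 _
  intro n
  induction n with
  | zero =>
    intro F hcard hF
    exact trivial_decomp q τ 𝒜 F hF (by
      have : F.card = 0 := Nat.le_zero.1 hcard
      rw [this]
      push_cast
      have : (0:ℝ) ≤ 32 * τ ^ (-(q:ℤ)) * 𝒜.card :=
        mul_nonneg (mul_nonneg (by norm_num) ht0.le) (Nat.cast_nonneg _)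
      linarith)
  | succ n ih =>
    intro F hcard hF
    by_cases hsmall : (F.card : ℝ) ≤ 32 * τ ^ (-(q:ℤ)) * 𝒜.card
    · exact trivial_decomp q τ 𝒜 F hF hsmall
    push_neg at hsmall
    have hF0 : (0:ℝ) < F.card := by
      refine lt_of_le_of_lt ?_ hsmall
      exact mul_nonneg (mul_nonneg (by norm_num) ht0.le) (Nat.cast_nonneg _)
    have h𝒜0 : (0:ℝ) < 𝒜.card :=
      lt_of_lt_of_le hF0 (by exact_mod_cast card_le_card hF)
    have hFne : F.Nonempty := by
      rw [← Finset.card_pos]; exact_mod_cast hF0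
    set cand : Finset (Finset α) := (F.biUnion Finset.powerset).filter (fun S =>
      τ ^ S.card * F.card * ((famRestrict 𝒜 S).card : ℝ) <
        ((famRestrict F S).card : ℝ) * 𝒜.card) with hcanddef
    by_cases hcand : cand.Nonempty
    · -- there is a violator; pick one of maximum cardinality
      obtain ⟨S, hScand, hSmax⟩ := exists_max_image cand Finset.card hcand
      have hSmem := (mem_filter.1 hScand).1
      have hSviol : τ ^ S.card * F.card * ((famRestrict 𝒜 S).card : ℝ) <
          ((famRestrict F S).card : ℝ) * 𝒜.card := (mem_filter.1 hScand).2
      have hFSne : (famRestrict F S).Nonempty := by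
        rcases (famRestrict F S).eq_empty_or_nonempty with h | h
        · rw [h] at hSviol
          simp only [card_empty, Nat.cast_zero, zero_mul] at hSviol
          have : (0:ℝ) ≤ τ ^ S.card * F.card * ((famRestrict 𝒜 S).card : ℝ) :=
            mul_nonneg (mul_nonneg (pow_nonneg hτ0.le _) (Nat.cast_nonneg _))
              (Nat.cast_nonneg _)
          linarith
        · exact h
      have hFS0 : (0:ℝ) < (famRestrict F S).card := by
        rw [← card_pos] at hFSne; exact_mod_cast hFSne
      have h𝒜S0 : (0:ℝ) < (famRestrict 𝒜 S).card := by
        have : (famRestrict F S).card ≤ (famRestrict 𝒜 S).card :=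
          card_le_card (famRestrict_mono hF S)
        have := (Nat.cast_le (α := ℝ)).2 this
        linarith
      have hcb : ((famRestrict F S).card : ℝ) ≤ ((famRestrict 𝒜 S).card : ℝ) := by
        exact_mod_cast card_le_card (famRestrict_mono hF S)
      have hp1 : (1:ℝ) ≤ τ ^ S.card := one_le_pow₀ hτ.le
      -- |S| ≤ q
      have hqS : S.card ≤ q := by
        by_contra h
        push_neg at h
        have h1 : τ ^ q ≤ τ ^ S.card := pow_le_pow_right₀ hτ.le h.le
        have htq : τ ^ (-(q:ℤ)) * τ ^ q = 1 := by
          rw [zpow_neg, zpow_natCast]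
          exact inv_mul_cancel₀ (by positivity)
        have hq0 : (0:ℝ) < τ ^ q := by positivity
        set t := τ ^ (-(q:ℤ))
        set m := ((𝒜.card : ℕ) : ℝ)
        set b := ((famRestrict 𝒜 S).card : ℝ)
        set c := ((famRestrict F S).card : ℝ)
        set p := τ ^ S.card
        have e1 : τ ^ q * (F.card : ℝ) * b ≤ p * (F.card : ℝ) * b :=
          mul_le_mul_of_nonneg_right (mul_le_mul_of_nonneg_right h1 hF0.le) h𝒜S0.le
        have e2 : τ ^ q * (32 * t * m) * b < τ ^ q * (F.card : ℝ) * b := by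
          have h2 := mul_lt_mul_of_pos_left hsmall hq0
          exact mul_lt_mul_of_pos_right h2 h𝒜S0
        have e3 : τ ^ q * (32 * t * m) * b = 32 * m * b := by
          linear_combination 32 * m * b * htq
        have e4 : c * m ≤ b * m := mul_le_mul_of_nonneg_right hcb h𝒜0.le
        nlinarith [mul_pos h𝒜0 h𝒜S0, hSviol, e1, e2, e3, e4]
      -- split F
      obtain ⟨B0, hB0⟩ := hFSne
      obtain ⟨A0, hA0F, hSA0, -⟩ := mem_famRestrict'.1 hB0
      set F₁ : Finset (Finset α) := F.filter (fun A => S ⊆ A) with hF₁def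
      set F₂ : Finset (Finset α) := F.filter (fun A => ¬ S ⊆ A) with hF₂def
      have hsplit : F₁ ∪ F₂ = F := filter_union_filter_not_eq _ F
      have hdisj12 : Disjoint F₁ F₂ := disjoint_filter_filter_not F F _
      have hF2lt : F₂.card < F.card :=
        card_lt_card (filter_ssubset.2 ⟨A0, hA0F, by simp [hSA0]⟩)
      obtain ⟨𝒮', Fs', ℛ', h1', h2', h3', h4', h5', h6', h7', h8', h9'⟩ :=
        ih F₂ (by omega) ((filter_subset _ _).trans hF)
      have hSnot : S ∉ 𝒮' := by
        intro hmem
        have hpos := h8' S hmem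
        have h𝒜Spos : (0:ℝ) < 16 * τ ^ (-(q:ℤ)) * ((famRestrict 𝒜 S).card : ℝ) := by
          positivity
        have : (0:ℝ) < (Fs' S).card := lt_of_lt_of_le h𝒜Spos hpos
        have hne : (Fs' S).Nonempty := by rw [← card_pos]; exact_mod_cast this
        obtain ⟨A, hA⟩ := hne
        have hmemF2 : S ∪ A ∈ F₂ := by
          rw [h4']
          exact mem_union_right _ (mem_biUnion.2 ⟨S, hmem, mem_image_of_mem _ hA⟩)
        rw [hF₂def, mem_filter] at hmemF2
        exact hmemF2.2 subset_union_left
      set Fs : Finset α → Finset (Finset α) :=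
        fun T => if T = S then famRestrict F S else Fs' T with hFsdef
      have hFsS : Fs S = famRestrict F S := if_pos rfl
      have hFsT : ∀ T ∈ 𝒮', Fs T = Fs' T := by
        intro T hT
        exact if_neg (by rintro rfl; exact hSnot hT)
      have hgS : (Fs S).image (fun A => S ∪ A) = F₁ := by
        rw [hFsS, image_union_famRestrict]
      have hgcong : 𝒮'.biUnion (fun T => (Fs T).image fun A => T ∪ A)
          = 𝒮'.biUnion (fun T => (Fs' T).image fun A => T ∪ A) :=
        biUnion_congr rfl (fun T hT => by rw [hFsT T hT])
      have hg'sub : ∀ T ∈ 𝒮', (Fs' T).image (fun A => T ∪ A) ⊆ F₂ := by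
        intro T hT x hx
        rw [h4']
        exact mem_union_right _ (mem_biUnion.2 ⟨T, hT, hx⟩)
      refine ⟨insert S 𝒮', Fs, ℛ', ?_, ?_, ?_, ?_, ?_, ?_, ?_, ?_, h9'⟩
      · -- shadow
        refine insert_subset ?_ h1'
        exact mem_famShadowLe'.2 ⟨A0, hF hA0F, hSA0, hqS⟩
      · exact h2'.trans (filter_subset _ _)
      · -- Fs ⊆ 𝒜(S)
        intro T hT
        rcases mem_insert.1 hT with rfl | hT'
        · rw [hFsS]; exact famRestrict_mono hF T
        · rw [hFsT T hT']; exact h3' T hT'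
      · -- partition
        rw [biUnion_insert, hgS, hgcong, union_left_comm, ← h4', hsplit]
      · -- disjoint ℛ'
        rw [biUnion_insert, hgS, hgcong]
        refine disjoint_union_right.2 ⟨?_, h5'⟩
        exact hdisj12.symm.mono_left h2'
      · -- pairwise disjoint
        intro T hT T' hT' hne
        rcases mem_insert.1 hT with rfl | hTm
        · rcases mem_insert.1 hT' with rfl | hT'm
          · exact absurd rfl hne
          · rw [hgS, hFsT T' hT'm]
            exact hdisj12.mono_right (hg'sub T' hT'm)
        · rcases mem_insert.1 hT' with rfl | hT'm
          · rw [hgS, hFsT T hTm]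
            exact (hdisj12.mono_right (hg'sub T hTm)).symm
          · rw [hFsT T hTm, hFsT T' hT'm]
            exact h6' T hTm T' hT'm hne
      · -- homogeneity
        intro T hT
        rcases mem_insert.1 hT with rfl | hTm
        · rw [hFsS]
          intro X
          by_cases hX : Disjoint X T
          · rw [famRestrict_famRestrict F hX, famRestrict_famRestrict 𝒜 hX]
            rcases X.eq_empty_or_nonempty with rfl | hXne
            · simp only [union_empty, card_empty, pow_zero, one_mul]
              exact le_rfl
            · have hcards : (T ∪ X).card = T.card + X.card :=
                card_union_of_disjoint hX.symm
              rcases (famRestrict F (T ∪ X)).eq_empty_or_nonempty with he | hne'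
              · rw [he]
                simp only [card_empty, Nat.cast_zero, zero_mul]
                exact mul_nonneg (mul_nonneg (pow_nonneg hτ0.le _) hFS0.le)
                  (Nat.cast_nonneg _)
              · obtain ⟨B, hB⟩ := hne'
                obtain ⟨A, hAF, hTXA, -⟩ := mem_famRestrict'.1 hB
                have hmemb : T ∪ X ∈ F.biUnion Finset.powerset :=
                  mem_biUnion.2 ⟨A, hAF, mem_powerset.2 hTXA⟩
                have hnotc : T ∪ X ∉ cand := by
                  intro hc
                  have := hSmax _ hc
                  have hx0 : 0 < X.card := card_pos.2 hXne
                  omega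
                have hnv : ((famRestrict F (T ∪ X)).card : ℝ) * 𝒜.card ≤
                    τ ^ (T ∪ X).card * F.card * ((famRestrict 𝒜 (T ∪ X)).card : ℝ) := by
                  by_contra hcon
                  push_neg at hcon
                  exact hnotc (mem_filter.2 ⟨hmemb, hcon⟩)
                rw [hcards, pow_add] at hnv
                set a := ((famRestrict F (T ∪ X)).card : ℝ)
                set b := ((famRestrict 𝒜 T).card : ℝ)
                set c := ((famRestrict F T).card : ℝ)
                set d := ((famRestrict 𝒜 (T ∪ X)).card : ℝ)
                set p := τ ^ T.card
                set x := τ ^ X.card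
                have hx0 : (0:ℝ) < x := pow_pos hτ0 _
                have hd0 : (0:ℝ) ≤ d := Nat.cast_nonneg _
                have e1 : a * 𝒜.card * b ≤ p * x * F.card * d * b :=
                  mul_le_mul_of_nonneg_right hnv h𝒜S0.le
                have e2 : x * d * (p * F.card * b) ≤ x * d * (c * 𝒜.card) :=
                  mul_le_mul_of_nonneg_left hSviol.le (mul_nonneg hx0.le hd0)
                have key : a * b * 𝒜.card ≤ x * c * d * 𝒜.card := by nlinarith [e1, e2]
                exact le_of_mul_le_mul_right key h𝒜0
          · rw [famRestrict_famRestrict_not_disjoint F hX]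
            simp only [card_empty, Nat.cast_zero, zero_mul]
            exact mul_nonneg (mul_nonneg (pow_nonneg hτ0.le _) hFS0.le)
              (Nat.cast_nonneg _)
        · rw [hFsT T hTm]
          exact h7' T hTm
      · -- size
        intro T hT
        rcases mem_insert.1 hT with rfl | hTm
        · rw [hFsS]
          have hb0 : (0:ℝ) ≤ ((famRestrict 𝒜 T).card : ℝ) := Nat.cast_nonneg _
          nlinarith [mul_le_mul_of_nonneg_right hsmall.le hb0,
            mul_nonneg (sub_nonneg.2 hp1) (mul_nonneg hF0.le hb0),
            mul_nonneg ht0.le hb0, h𝒜0, hSviol]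
        · rw [hFsT T hTm]
          exact h8' T hTm
    · -- no violator: F itself is homogeneous
      rw [not_nonempty_iff_eq_empty] at hcand
      obtain ⟨A0, hA0⟩ := hFne
      refine ⟨{∅}, fun _ => F, ∅, ?_, empty_subset _, ?_, ?_, ?_, ?_, ?_, ?_, ?_⟩
      · rw [singleton_subset_iff]
        exact mem_famShadowLe'.2 ⟨A0, hF hA0, empty_subset _, by simp⟩
      · intro T hT
        rw [mem_singleton] at hT
        subst hT
        rw [famRestrict_empty']
        exact hF
      · rw [singleton_biUnion]
        simp [Finset.image_id']
      · simp
      · intro T hT T' hT' hne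
        rw [mem_singleton] at hT hT'
        subst hT; subst hT'
        exact absurd rfl hne
      · intro T hT
        rw [mem_singleton] at hT
        subst hT
        rw [famRestrict_empty']
        intro X
        by_contra hv
        push_neg at hv
        have hXne : (famRestrict F X).Nonempty := by
          rcases (famRestrict F X).eq_empty_or_nonempty with h | h
          · rw [h] at hv
            simp only [card_empty, Nat.cast_zero, zero_mul] at hv
            have : (0:ℝ) ≤ τ ^ X.card * F.card * ((famRestrict 𝒜 X).card : ℝ) :=
              mul_nonneg (mul_nonneg (pow_nonneg hτ0.le _) (Nat.cast_nonneg _))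
                (Nat.cast_nonneg _)
            linarith
          · exact h
        obtain ⟨B, hB⟩ := hXne
        obtain ⟨A, hAF, hXA, -⟩ := mem_famRestrict'.1 hB
        have : X ∈ cand :=
          mem_filter.2 ⟨mem_biUnion.2 ⟨A, hAF, mem_powerset.2 hXA⟩, hv⟩
        rw [hcand] at this
        exact notMem_empty _ this
      · intro T hT
        rw [mem_singleton] at hT
        subst hT
        rw [famRestrict_empty']
        nlinarith [mul_nonneg ht0.le h𝒜0.le]
      · simp only [card_empty, Nat.cast_zero]
        exact mul_nonneg (mul_nonneg (by norm_num) ht0.le) (Nat.cast_nonneg _)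

end SpreadAux

/-- Lemma 6.4 (spread approximation with large measure). -/
theorem spread_approximation_large_measure {α : Type*} [DecidableEq α]
    (q k : ℕ) (hq : 1 ≤ q) (τ r : ℝ) (hτ : 1 < τ) (hr : 1 ≤ r)
    (𝒜 : Finset (Finset α)) (hAunif : IsUniform 𝒜 k) (hAspread : IsSpread r 𝒜)
    (F : Finset (Finset α)) (hF : F ⊆ 𝒜) :
    ∃ (𝒮 : Finset (Finset α)) (Fs : Finset α → Finset (Finset α))
      (ℛ : Finset (Finset α)),
      𝒮 ⊆ famShadowLe 𝒜 q ∧ ℛ ⊆ F ∧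
      (∀ S ∈ 𝒮, Fs S ⊆ famRestrict 𝒜 S) ∧
      F = ℛ ∪ 𝒮.biUnion (fun S => (Fs S).image fun A => S ∪ A) ∧
      Disjoint ℛ (𝒮.biUnion fun S => (Fs S).image fun A => S ∪ A) ∧
      (∀ S ∈ 𝒮, ∀ S' ∈ 𝒮, S ≠ S' →
        Disjoint ((Fs S).image fun A => S ∪ A) ((Fs S').image fun A => S' ∪ A)) ∧
      (∀ S ∈ 𝒮, IsHomog τ (Fs S) (famRestrict 𝒜 S)) ∧
      (∀ S ∈ 𝒮, 16 * τ ^ (-(q:ℤ)) * ((famRestrict 𝒜 S).card : ℝ) ≤ ((Fs S).card : ℝ)) ∧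
      ((ℛ.card : ℝ) ≤ 32 * τ ^ (-(q:ℤ)) * (𝒜.card : ℝ)) := by
  exact spread_aux q τ hτ 𝒜 F.card F le_rfl hF
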